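/- For every finite simple graph G on n vertices with maximum degree d_max ≥ 1, there exist vectors x₁, …, xₙ ∈ ℝ^{2·d_max} with ‖x_i‖ = 1 for every i, such that for all i ≠ j: the vertices v_i and v_j are adjacent in G if and only if ⟨x_i, x_j⟩ = 0. -/

import Mathlib

open scoped Classical
open FiniteDimensional Module Submodule

/-- A nontrivial subspace is not covered by finitely many subspaces not containing it. -/
lemma aux_exists_notMem {V : Type*} [AddCommGroup V] [Module ℝ V]
    (W : Submodule ℝ V) (hW : W ≠ ⊥) {ι : Type*} [Finite ι] [Finite (Option ι)] (B : ι → Submodule ℝ V)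
    (hB : ∀ t, ¬ W ≤ B t) : ∃ y ∈ W, y ≠ 0 ∧ ∀ t, y ∉ B t := by
  set p : Option ι → Subspace ℝ W := fun o => o.elim ⊥ (fun t => (B t).comap W.subtype) with hp
  have hcover : ⋃ o, (p o : Set W) ≠ Set.univ := by
    intro h
    obtain ⟨o, ho⟩ := Subspace.exists_eq_top_of_iUnion_eq_univ h
    match o with
    | none =>
      have : (⊥ : Subspace ℝ W) = ⊤ := ho
      have : Subsingleton W := by
        constructor
        intro a b
        have ha : a ∈ (⊥ : Subspace ℝ W) := this ▸ Submodule.mem_top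
        have hb : b ∈ (⊥ : Subspace ℝ W) := this ▸ Submodule.mem_top
        simp only [Submodule.mem_bot] at ha hb
        rw [ha, hb]
      exact hW (Submodule.eq_bot_of_subsingleton)
    | some t =>
      refine hB t ?_
      intro v hv
      have : (⟨v, hv⟩ : W) ∈ (B t).comap W.subtype := by
        have : (⟨v, hv⟩ : W) ∈ (p (some t)) := ho ▸ Submodule.mem_top
        exact this
      exact this
  obtain ⟨y, hy⟩ := Set.ne_univ_iff_exists_notMem _ |>.mp hcover
  simp only [Set.mem_iUnion, not_exists] at hy
  refine ⟨(y : V), y.2, ?_, ?_⟩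
  · intro h0
    exact hy none (by
      have : y = 0 := Subtype.ext h0
      simp [hp, this])
  · intro t ht
    exact hy (some t) (by simpa [hp] using ht)

/-- Core dimension argument: the orthocomplement of the span of the (already chosen)
neighbors of a new vertex `i` is not contained in the span of at most `dmax` chosen
vectors. -/
lemma maehara_core {n dmax : ℕ} (hd : 1 ≤ dmax) {G : SimpleGraph (Fin n)}
    (hdeg : ∀ v, G.degree v ≤ dmax)
    {s : Finset (Fin n)} {x : Fin n → EuclideanSpace ℝ (Fin (2 * dmax))}
    (hnorm : ∀ j ∈ s, ‖x j‖ = 1)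
    (hadj : ∀ j ∈ s, ∀ m ∈ s, j ≠ m → (G.Adj j m ↔ inner ℝ (x j) (x m) = (0 : ℝ)))
    {i : Fin n} (his : i ∉ s) {F : Finset (Fin n)} (hFs : F ⊆ s) (hFcard : F.card ≤ dmax) :
    ¬ ((Submodule.span ℝ (((s.filter (G.Adj i)).image x :
          Finset (EuclideanSpace ℝ (Fin (2 * dmax)))) : Set (EuclideanSpace ℝ (Fin (2 * dmax)))))ᗮ
        ≤ Submodule.span ℝ ((F.image x : Finset (EuclideanSpace ℝ (Fin (2 * dmax)))) :
          Set (EuclideanSpace ℝ (Fin (2 * dmax))))) := by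
  intro hle
  set M := s.filter (G.Adj i) with hM
  set K := Submodule.span ℝ ((M.image x : Finset (EuclideanSpace ℝ (Fin (2 * dmax)))) : Set (EuclideanSpace ℝ (Fin (2 * dmax)))) with hK
  set B := Submodule.span ℝ ((F.image x : Finset (EuclideanSpace ℝ (Fin (2 * dmax)))) : Set (EuclideanSpace ℝ (Fin (2 * dmax)))) with hB
  have hE : Module.finrank ℝ (EuclideanSpace ℝ (Fin (2 * dmax))) = 2 * dmax :=
    finrank_euclideanSpace_fin
  have hKW : Module.finrank ℝ K + Module.finrank ℝ Kᗮ = 2 * dmax := by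
    have := Submodule.finrank_add_finrank_orthogonal K; omega
  have hMcard : M.card ≤ dmax := by
    calc M.card ≤ (G.neighborFinset i).card := by
          apply Finset.card_le_card
          intro m hm
          simp only [hM, Finset.mem_filter] at hm
          simpa [SimpleGraph.mem_neighborFinset] using hm.2
      _ = G.degree i := (G.card_neighborFinset_eq_degree i)
      _ ≤ dmax := hdeg i
  have hKfr : Module.finrank ℝ K ≤ dmax := by
    calc Module.finrank ℝ K ≤ (M.image x).card := finrank_span_finset_le_card _
      _ ≤ M.card := Finset.card_image_le
      _ ≤ dmax := hMcard
  have hWfr : dmax ≤ Module.finrank ℝ Kᗮ := by omega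
  have hBfr : Module.finrank ℝ B ≤ dmax := by
    calc Module.finrank ℝ B ≤ (F.image x).card := finrank_span_finset_le_card _
      _ ≤ F.card := Finset.card_image_le
      _ ≤ dmax := hFcard
  have hWB : Module.finrank ℝ Kᗮ ≤ Module.finrank ℝ B := Submodule.finrank_mono hle
  have hWeq : Kᗮ = B := Submodule.eq_of_le_of_finrank_le hle (by omega)
  -- M is nonempty
  have hKd : Module.finrank ℝ K = dmax := by omega
  have hMne : M.Nonempty := by
    rcases Finset.eq_empty_or_nonempty M with h | h
    · rw [h] at hK
      simp only [Finset.image_empty, Finset.coe_empty, Submodule.span_empty] at hK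
      rw [hK] at hKd
      simp only [finrank_bot] at hKd
      omega
    · exact h
  obtain ⟨m, hm⟩ := hMne
  have hms : m ∈ s := (Finset.mem_filter.mp hm).1
  have him : G.Adj i m := (Finset.mem_filter.mp hm).2
  -- F.card = dmax
  have hFd : dmax ≤ F.card := by
    have : Module.finrank ℝ Kᗮ ≤ F.card := by
      rw [hWeq]
      calc Module.finrank ℝ B ≤ (F.image x).card := finrank_span_finset_le_card _
        _ ≤ F.card := Finset.card_image_le
    omega
  -- every f ∈ F is adjacent to m
  have hadjF : ∀ f ∈ F, G.Adj m f := by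
    intro f hf
    have hxfB : x f ∈ B := Submodule.subset_span (by
      simp only [Finset.coe_image, Set.mem_image]
      exact ⟨f, by simpa using hf, rfl⟩)
    have hxfW : x f ∈ Kᗮ := hWeq ▸ hxfB
    have hxmK : x m ∈ K := Submodule.subset_span (by
      simp only [Finset.coe_image, Set.mem_image]
      exact ⟨m, by simpa using hm, rfl⟩)
    have hinner : inner ℝ (x m) (x f) = (0 : ℝ) :=
      (Submodule.mem_orthogonal K (x f)).mp hxfW (x m) hxmK
    have hfm : f ≠ m := by
      rintro rfl
      rw [real_inner_self_eq_norm_sq, hnorm f (hFs hf)] at hinner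
      norm_num at hinner
    exact (hadj m hms f (hFs hf) (Ne.symm hfm)).mpr hinner
  -- so m has too many neighbors
  have hsub : insert i F ⊆ G.neighborFinset m := by
    intro a ha
    rcases Finset.mem_insert.mp ha with rfl | ha
    · simpa [SimpleGraph.mem_neighborFinset] using him.symm
    · simpa [SimpleGraph.mem_neighborFinset] using hadjF a ha
  have hiF : i ∉ F := fun h => his (hFs h)
  have : dmax + 1 ≤ G.degree m := by
    calc dmax + 1 ≤ F.card + 1 := by omega
      _ = (insert i F).card := (Finset.card_insert_of_notMem hiF).symm
      _ ≤ (G.neighborFinset m).card := Finset.card_le_card hsub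
      _ = G.degree m := G.card_neighborFinset_eq_degree m
  have := hdeg m
  omega
/-- Lemma 1 of the paper, due to Maehara. Every finite simple graph on
`n` vertices with maximum degree at most `d_max ≥ 1` admits a unit-norm embedding of its
vertices in `ℝ^{2·d_max}` in which two distinct vertices are adjacent if and only if
their embeddings are orthogonal. -/
theorem maehara_orthogonal_embedding (n dmax : ℕ) (hd : 1 ≤ dmax)
    (G : SimpleGraph (Fin n)) (hdeg : ∀ v, G.degree v ≤ dmax) :
    ∃ x : Fin n → EuclideanSpace ℝ (Fin (2 * dmax)),
      (∀ i, ‖x i‖ = 1) ∧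
      ∀ i j, i ≠ j → (G.Adj i j ↔ inner ℝ (x i) (x j) = (0 : ℝ)) := by
  suffices h : ∀ s : Finset (Fin n), ∃ x : Fin n → EuclideanSpace ℝ (Fin (2 * dmax)),
      (∀ j ∈ s, ‖x j‖ = 1) ∧
      (∀ j ∈ s, ∀ m ∈ s, j ≠ m → (G.Adj j m ↔ inner ℝ (x j) (x m) = (0 : ℝ))) ∧
      (∀ k : Fin n, ∀ j ∈ s, j ≠ k → ¬ G.Adj j k →
        x j ∉ Submodule.span ℝ (((s.filter (G.Adj k)).image x :
          Finset (EuclideanSpace ℝ (Fin (2 * dmax)))) :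
          Set (EuclideanSpace ℝ (Fin (2 * dmax))))) by
    obtain ⟨x, h1, h2, _⟩ := h Finset.univ
    exact ⟨x, fun i => h1 i (Finset.mem_univ i),
      fun i j hij => h2 i (Finset.mem_univ i) j (Finset.mem_univ j) hij⟩
  intro s
  induction s using Finset.induction_on with
  | empty => exact ⟨fun _ => 0, by simp, by simp, by simp⟩
  | @insert i s his ih =>
    obtain ⟨x, h1, h2, h3⟩ := ih
    classical
    set M := s.filter (G.Adj i) with hM
    set K := Submodule.span ℝ ((M.image x : Finset (EuclideanSpace ℝ (Fin (2 * dmax)))) :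
      Set (EuclideanSpace ℝ (Fin (2 * dmax)))) with hK
    -- the orthocomplement of the span of already-chosen neighbors is nontrivial
    have hfiltcard : ∀ k : Fin n, (s.filter (G.Adj k)).card ≤ G.degree k := by
      intro k
      rw [← G.card_neighborFinset_eq_degree k]
      apply Finset.card_le_card
      intro m hm
      simp only [Finset.mem_filter] at hm
      simpa [SimpleGraph.mem_neighborFinset] using hm.2
    have hE : Module.finrank ℝ (EuclideanSpace ℝ (Fin (2 * dmax))) = 2 * dmax :=
      finrank_euclideanSpace_fin
    have hKfr : Module.finrank ℝ K ≤ dmax := by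
      calc Module.finrank ℝ K ≤ (M.image x).card := finrank_span_finset_le_card _
        _ ≤ M.card := Finset.card_image_le
        _ ≤ G.degree i := hfiltcard i
        _ ≤ dmax := hdeg i
    have hWfr : dmax ≤ Module.finrank ℝ Kᗮ := by
      have := Submodule.finrank_add_finrank_orthogonal K
      omega
    have hWne : Kᗮ ≠ ⊥ := by
      intro hbot
      rw [hbot] at hWfr
      simp only [finrank_bot] at hWfr
      omega
    -- the finite family of "bad" subspaces to avoid
    set B : (Fin n ⊕ Fin n) ⊕ Fin n × Fin n →
        Submodule ℝ (EuclideanSpace ℝ (Fin (2 * dmax))) := fun t =>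
      match t with
      | .inl (.inl j) => if j ∈ s ∧ ¬ G.Adj i j then (ℝ ∙ (x j))ᗮ else ⊥
      | .inl (.inr k) => if G.Adj i k then ⊥ else
          Submodule.span ℝ (((s.filter (G.Adj k)).image x :
            Finset (EuclideanSpace ℝ (Fin (2 * dmax)))) :
            Set (EuclideanSpace ℝ (Fin (2 * dmax))))
      | .inr (k, j) => if G.Adj i k ∧ j ∈ s ∧ j ≠ k ∧ ¬ G.Adj j k then
          Submodule.span ℝ (((insert j (s.filter (G.Adj k))).image x :
            Finset (EuclideanSpace ℝ (Fin (2 * dmax)))) :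
            Set (EuclideanSpace ℝ (Fin (2 * dmax)))) else ⊥
      with hBdef
    have hBbad : ∀ t, ¬ Kᗮ ≤ B t := by
      rintro ((j | k) | ⟨k, j⟩)
      · -- non-adjacent chosen vertex: avoid its orthocomplement
        simp only [hBdef]
        split_ifs with hcond
        · obtain ⟨hjs, hnadj⟩ := hcond
          intro hle
          have hji : x j ∈ Kᗮᗮ := by
            rw [Submodule.mem_orthogonal]
            intro u hu
            exact Submodule.mem_orthogonal_singleton_iff_inner_left.mp (hle hu)
          rw [Submodule.orthogonal_orthogonal] at hji
          have hjne : j ≠ i := fun h => his (h ▸ hjs)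
          exact h3 i j hjs hjne (fun h => hnadj h.symm) hji
        · exact fun h => hWne (le_bot_iff.mp h)
      · -- spans of neighbor sets of non-neighbors of i
        simp only [hBdef]
        split_ifs with hcond
        · exact fun h => hWne (le_bot_iff.mp h)
        · exact maehara_core hd hdeg h1 h2 his (Finset.filter_subset _ _)
            ((hfiltcard k).trans (hdeg k))
      · -- spans enlarged by the new vector
        simp only [hBdef]
        split_ifs with hcond
        · obtain ⟨hik, hjs, hjk, hnadj⟩ := hcond
          have hsub : insert j (s.filter (G.Adj k)) ⊆ s :=
            Finset.insert_subset hjs (Finset.filter_subset _ _)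
          have hcard : (insert j (s.filter (G.Adj k))).card ≤ dmax := by
            have hlt : (s.filter (G.Adj k)).card < G.degree k := by
              rw [← G.card_neighborFinset_eq_degree k]
              apply Finset.card_lt_card
              rw [Finset.ssubset_iff_of_subset]
              · exact ⟨i, by simpa [SimpleGraph.mem_neighborFinset] using hik.symm,
                  fun hmem => his (Finset.mem_filter.mp hmem).1⟩
              · intro m hm
                simp only [Finset.mem_filter] at hm
                simpa [SimpleGraph.mem_neighborFinset] using hm.2
            have := hdeg k
            calc (insert j (s.filter (G.Adj k))).card
                ≤ (s.filter (G.Adj k)).card + 1 := Finset.card_insert_le _ _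
              _ ≤ dmax := by omega
          exact maehara_core hd hdeg h1 h2 his hsub hcard
        · exact fun h => hWne (le_bot_iff.mp h)
    obtain ⟨y, hyW, hy0, hyB⟩ := aux_exists_notMem Kᗮ hWne B hBbad
    set z : EuclideanSpace ℝ (Fin (2 * dmax)) := (‖y‖⁻¹ : ℝ) • y with hz
    have hz1 : ‖z‖ = 1 := norm_smul_inv_norm hy0
    have hzW : z ∈ Kᗮ := Submodule.smul_mem _ _ hyW
    have hzB : ∀ t, z ∉ B t := by
      intro t hzt
      apply hyB t
      have hyz : y = (‖y‖ : ℝ) • z := by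
        rw [hz, smul_smul, mul_inv_cancel₀ (norm_ne_zero_iff.mpr hy0), one_smul]
      rw [hyz]
      exact Submodule.smul_mem _ _ hzt
    set x' := Function.update x i z with hx'
    have hx's : ∀ m ∈ s, x' m = x m := by
      intro m hm
      apply Function.update_of_ne
      rintro rfl
      exact his hm
    have hx'i : x' i = z := Function.update_self _ _ _
    have himg : ∀ F : Finset (Fin n), F ⊆ s → F.image x' = F.image x := by
      intro F hF
      apply Finset.image_congr
      intro m hm
      exact hx's m (hF (by simpa using hm))
    -- key orthogonality facts for the new vector
    have hz_orth : ∀ m ∈ s, G.Adj i m → inner ℝ z (x m) = (0 : ℝ) := by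
      intro m hm hadj
      have hxmK : x m ∈ K := Submodule.subset_span (by
        simp only [Finset.coe_image, Set.mem_image]
        exact ⟨m, by simp [hM, Finset.mem_filter, hm, hadj], rfl⟩)
      exact (Submodule.mem_orthogonal' _ z).mp hzW (x m) hxmK
    have hz_nonorth : ∀ m ∈ s, ¬ G.Adj i m → inner ℝ z (x m) ≠ (0 : ℝ) := by
      intro m hm hnadj hzero
      have := hzB (.inl (.inl m))
      rw [hBdef] at this
      simp only [if_pos (And.intro hm hnadj)] at this
      exact this (Submodule.mem_orthogonal_singleton_iff_inner_left.mpr hzero)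
    refine ⟨x', ?_, ?_, ?_⟩
    · intro j hj
      rcases Finset.mem_insert.mp hj with rfl | hj
      · rw [hx'i]; exact hz1
      · rw [hx's j hj]; exact h1 j hj
    · intro j hj m hm hjm
      rcases Finset.mem_insert.mp hj with rfl | hjs'
      · rcases Finset.mem_insert.mp hm with rfl | hms'
        · exact absurd rfl hjm
        · rw [hx'i, hx's m hms']
          constructor
          · exact fun h => hz_orth m hms' h
          · intro h
            by_contra hn
            exact hz_nonorth m hms' hn h
      · rcases Finset.mem_insert.mp hm with rfl | hms'
        · rw [hx'i, hx's j hjs']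
          rw [G.adj_comm]
          rw [real_inner_comm]
          constructor
          · exact fun h => hz_orth j hjs' h
          · intro h
            by_contra hn
            exact hz_nonorth j hjs' hn h
        · rw [hx's j hjs', hx's m hms']
          exact h2 j hjs' m hms' hjm
    · intro k j hj hjk hnadj
      rcases Finset.mem_insert.mp hj with rfl | hjs'
      · -- j = i (renamed): need z ∉ span of x-images of neighbors of k in s
        have hnik : ¬ G.Adj j k := hnadj
        have hki : ¬ G.Adj k j := fun h => hnik h.symm
        rw [Finset.filter_insert, if_neg hki]
        rw [himg _ (Finset.filter_subset _ _), hx'i]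
        have := hzB (.inl (.inr k))
        rw [hBdef] at this
        simpa only [if_neg (fun h => hnik h)] using this
      · rw [hx's j hjs']
        by_cases hik : G.Adj i k
        · -- the filter gains the new vertex i
          have hki : G.Adj k i := hik.symm
          rw [Finset.filter_insert, if_pos hki, Finset.image_insert, hx'i,
            himg _ (Finset.filter_subset _ _)]
          intro hmem
          rw [Finset.coe_insert] at hmem
          obtain ⟨c, u, huU, hxj⟩ := Submodule.mem_span_insert.mp hmem
          have hxjU : x j ∉ Submodule.span ℝ (((s.filter (G.Adj k)).image x :
              Finset (EuclideanSpace ℝ (Fin (2 * dmax)))) :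
              Set (EuclideanSpace ℝ (Fin (2 * dmax)))) :=
            h3 k j hjs' hjk hnadj
          have hc : c ≠ 0 := by
            rintro rfl
            rw [zero_smul, zero_add] at hxj
            exact hxjU (hxj ▸ huU)
          have hzmem : z ∈ Submodule.span ℝ (((insert j (s.filter (G.Adj k))).image x :
              Finset (EuclideanSpace ℝ (Fin (2 * dmax)))) :
              Set (EuclideanSpace ℝ (Fin (2 * dmax)))) := by
            have hzeq : z = c⁻¹ • (x j - u) := by
              rw [hxj]
              rw [add_sub_cancel_right, smul_smul, inv_mul_cancel₀ hc, one_smul]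
            rw [hzeq]
            apply Submodule.smul_mem
            apply Submodule.sub_mem
            · apply Submodule.subset_span
              rw [Finset.image_insert, Finset.coe_insert]
              exact Set.mem_insert _ _
            · refine Submodule.span_mono ?_ huU
              rw [Finset.image_insert, Finset.coe_insert]
              exact Set.subset_insert _ _
          have := hzB (.inr (k, j))
          rw [hBdef] at this
          simp only [if_pos (And.intro hik (And.intro hjs' (And.intro hjk hnadj)))] at this
          exact this hzmem
        · -- filter unchanged
          have hki : ¬ G.Adj k i := fun h => hik h.symm
          rw [Finset.filter_insert, if_neg hki, himg _ (Finset.filter_subset _ _)]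
          exact h3 k j hjs' hjk hnadj
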